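/- Let V be a finite set, π strictly positive probability weights, and x ≠ y in V. Then for any probability vector η on V, the averaged configuration η^{xy} (pooling the mass at x and y and redistributing proportionally to π(x), π(y)) satisfies ∑_z π(z)·(η^{xy}(z)/π(z) − 1)^2 ≤ ∑_z π(z)·(η(z)/π(z) − 1)^2. In particular the weighted L²-distance to π is non-increasing under any averaging move. -/
import Mathlib


open Finset

theorem averaging_move_L2_nonincreasing {V : Type*} [Fintype V] [DecidableEq V]
    (π η : V → ℝ) (hπpos : ∀ z, 0 < π z) (hπ1 : ∑ z, π z = 1)
    (hηpos : ∀ z, 0 ≤ η z) (hη1 : ∑ z, η z = 1)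
    (x y : V) (hxy : x ≠ y)
    (ηxy : V → ℝ)
    (hηxy : ηxy = fun z =>
      if z = x then π x / (π x + π y) * (η x + η y)
      else if z = y then π y / (π x + π y) * (η x + η y)
      else η z) :
    ∑ z, π z * (ηxy z / π z - 1) ^ 2 ≤ ∑ z, π z * (η z / π z - 1) ^ 2 := by
  have hx := hπpos x
  have hy := hπpos y
  have hsplit : ∀ g : V → ℝ, ∑ z, g z = g x + g y + ∑ z ∈ univ \ {x, y}, g z := by
    intro g
    rw [← Finset.sum_sdiff (Finset.subset_univ {x, y}), Finset.sum_pair hxy]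
    ring
  rw [hsplit, hsplit]
  have hrest : ∑ z ∈ univ \ {x, y}, π z * (ηxy z / π z - 1) ^ 2
      = ∑ z ∈ univ \ {x, y}, π z * (η z / π z - 1) ^ 2 := by
    apply Finset.sum_congr rfl
    intro z hz
    simp only [Finset.mem_sdiff, Finset.mem_insert, Finset.mem_singleton] at hz
    push_neg at hz
    rw [hηxy]
    simp [hz.2.1, hz.2.2]
  rw [hrest]
  have hax : ηxy x = π x / (π x + π y) * (η x + η y) := by rw [hηxy]; simp
  have hay : ηxy y = π y / (π x + π y) * (η x + η y) := by
    rw [hηxy]; simp [hxy.symm]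
  rw [hax, hay]
  have hxy' : 0 < π x + π y := by linarith
  have key : π x * (π x / (π x + π y) * (η x + η y) / π x - 1) ^ 2 +
      π y * (π y / (π x + π y) * (η x + η y) / π y - 1) ^ 2
      ≤ π x * (η x / π x - 1) ^ 2 + π y * (η y / π y - 1) ^ 2 := by
    rw [← sub_nonneg]
    have heq : π x * (η x / π x - 1) ^ 2 + π y * (η y / π y - 1) ^ 2 -
        (π x * (π x / (π x + π y) * (η x + η y) / π x - 1) ^ 2 +
         π y * (π y / (π x + π y) * (η x + η y) / π y - 1) ^ 2)
        = (η x * π y - η y * π x) ^ 2 / (π x * π y * (π x + π y)) := by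
      field_simp
      ring
    rw [heq]
    positivity
  linarith
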